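/- Let D < 0 be an integer congruent to 0 or 1 mod 4 and let k ≥ 2 be an integer. For z in the upper half-plane, the series f_{k,D}(z) = π^{-k} · Σ over triples (a,b,c) ∈ ℤ³ with b² − 4ac = D and a > 0 of (az² + bz + c)^{−k} converges absolutely, and uniformly on compact subsets of the upper half-plane minus the CM points of discriminant D. -/

import Mathlib

open Complex Real Filter Topology BigOperators

noncomputable section

/-- The upper half-plane, as a subset of `ℂ`. -/
def UHP : Set ℂ := {z : ℂ | 0 < z.im}

/-- `z` is a CM point of discriminant `D`: a root in the upper half-plane of an
integral quadratic `a X² + b X + c` with `a > 0` and `b² - 4ac = D`. -/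
def IsCM (D : ℤ) (z : ℂ) : Prop :=
  0 < z.im ∧ ∃ a b c : ℤ, 0 < a ∧ b ^ 2 - 4 * a * c = D ∧ (a : ℂ) * z ^ 2 + b * z + c = 0

/-- Integral binary quadratic forms `(a, b, c)` of discriminant `D` with `a > 0`. -/
def QF (D : ℤ) : Set (ℤ × ℤ × ℤ) :=
  {Q | 0 < Q.1 ∧ Q.2.1 ^ 2 - 4 * Q.1 * Q.2.2 = D}

/-- The quadratic polynomial `a z² + b z + c` attached to `Q = (a, b, c)`. -/
def qpoly (Q : ℤ × ℤ × ℤ) (z : ℂ) : ℂ := (Q.1 : ℂ) * z ^ 2 + (Q.2.1 : ℂ) * z + (Q.2.2 : ℂ)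

/-- The series `f_{k,D}(z) = π⁻ᵏ Σ_{b²-4ac=D, a>0} (a z² + b z + c)⁻ᵏ`. -/
def fkD (k : ℕ) (D : ℤ) (z : ℂ) : ℂ :=
  (π : ℂ) ^ (-(k : ℤ)) * ∑' Q : QF D, qpoly Q.1 z ^ (-(k : ℤ))

/-- The Möbius action of `γ ∈ SL₂(ℤ)` on `ℂ`. -/
def mob (γ : Matrix.SpecialLinearGroup (Fin 2) ℤ) (z : ℂ) : ℂ :=
  ((γ.1 0 0 : ℂ) * z + (γ.1 0 1 : ℂ)) / ((γ.1 1 0 : ℂ) * z + (γ.1 1 1 : ℂ))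

def cmpt (D a b : ℤ) : ℂ :=
  ⟨-(b:ℝ)/(2*(a:ℝ)), Real.sqrt (-(D:ℝ))/(2*(a:ℝ))⟩

lemma cmpt_re (D a b : ℤ) : (cmpt D a b).re = -(b:ℝ)/(2*(a:ℝ)) := rfl

lemma cmpt_im (D a b : ℤ) : (cmpt D a b).im = Real.sqrt (-(D:ℝ))/(2*(a:ℝ)) := rfl

lemma cmpt_im_pos {D a : ℤ} (hD : D < 0) (ha : 0 < a) (b : ℤ) : 0 < (cmpt D a b).im := by
  rw [cmpt_im]
  apply div_pos
  · apply Real.sqrt_pos.2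
    simp only [neg_pos]
    exact_mod_cast hD
  · positivity

lemma qpoly_factor {D : ℤ} (hD : D < 0) {a b c : ℤ} (ha : 0 < a)
    (hdisc : b ^ 2 - 4 * a * c = D) (z : ℂ) :
    qpoly (a, b, c) z
      = (a:ℂ) * (z - cmpt D a b) * (z - (starRingEnd ℂ) (cmpt D a b)) := by
  have haR : ((a:ℝ)) ≠ 0 := by positivity
  have haC : ((a:ℂ)) ≠ 0 := by exact_mod_cast (by positivity : ((a:ℝ)) ≠ 0)
  set P : ℝ := -(b:ℝ)/(2*(a:ℝ)) with hPdef
  set Q : ℝ := Real.sqrt (-(D:ℝ))/(2*(a:ℝ)) with hQdef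
  have hcm : cmpt D a b = (P:ℂ) + (Q:ℂ) * Complex.I := by
    rw [cmpt, ← hPdef, ← hQdef, Complex.mk_eq_add_mul_I]
  have hconj : (starRingEnd ℂ) (cmpt D a b) = (P:ℂ) - (Q:ℂ) * Complex.I := by
    rw [hcm]
    simp [map_add, map_mul, Complex.conj_ofReal, Complex.conj_I]
    ring
  have hP : 2*(a:ℂ)*(P:ℂ) = -(b:ℂ) := by
    have : 2*(a:ℝ)*P = -(b:ℝ) := by
      rw [hPdef]; field_simp
    exact_mod_cast congrArg (Complex.ofReal) this
  have hQ : 4*(a:ℂ)^2*(Q:ℂ)^2 = -(D:ℂ) := by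
    have hDnn : (0:ℝ) ≤ -(D:ℝ) := by
      simp only [neg_nonneg]
      exact_mod_cast hD.le
    have : 4*(a:ℝ)^2*Q^2 = -(D:ℝ) := by
      rw [hQdef, div_pow, Real.sq_sqrt hDnn]
      field_simp
      ring
    exact_mod_cast congrArg (Complex.ofReal) this
  have hD' : (b:ℂ)^2 - 4*(a:ℂ)*(c:ℂ) = (D:ℂ) := by exact_mod_cast hdisc
  rw [hconj, hcm, qpoly]
  simp only
  have h4a : (4*(a:ℂ)) ≠ 0 := by
    intro h
    apply haC
    have : (4:ℂ) ≠ 0 := by norm_num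
    exact (mul_eq_zero.1 h).resolve_left this
  apply mul_left_cancel₀ h4a
  linear_combination (4*(a:ℂ)*z - (2*(a:ℂ)*(P:ℂ) - (b:ℂ))) * hP - hQ
    - hD' + (4*(a:ℂ)^2*(Q:ℂ)^2) * Complex.I_sq

lemma qpoly_cmpt_eq_zero {D : ℤ} (hD : D < 0) {a b c : ℤ} (ha : 0 < a)
    (hdisc : b ^ 2 - 4 * a * c = D) :
    qpoly (a, b, c) (cmpt D a b) = 0 := by
  rw [qpoly_factor hD ha hdisc]
  simp

lemma isCM_cmpt {D : ℤ} (hD : D < 0) {a b c : ℤ} (ha : 0 < a)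
    (hdisc : b ^ 2 - 4 * a * c = D) : IsCM D (cmpt D a b) := by
  refine ⟨cmpt_im_pos hD ha b, a, b, c, ha, hdisc, ?_⟩
  have h := qpoly_cmpt_eq_zero hD ha hdisc
  rw [qpoly] at h
  exact h

lemma isCM_eq_cmpt {D : ℤ} (hD : D < 0) {w : ℂ} (hw : IsCM D w) :
    ∃ a b c : ℤ, 0 < a ∧ b ^ 2 - 4 * a * c = D ∧ w = cmpt D a b := by
  obtain ⟨him, a, b, c, ha, hdisc, hroot⟩ := hw
  refine ⟨a, b, c, ha, hdisc, ?_⟩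
  have hfac := qpoly_factor hD ha hdisc w
  rw [qpoly] at hfac
  simp only at hfac
  rw [hroot] at hfac
  have haC : ((a:ℂ)) ≠ 0 := by
    simp only [ne_eq, Int.cast_eq_zero]
    omega
  have h0 : (w - cmpt D a b) * (w - (starRingEnd ℂ) (cmpt D a b)) = 0 := by
    have := hfac.symm
    rw [mul_assoc] at this
    exact (mul_eq_zero.1 this).resolve_left haC
  rcases mul_eq_zero.1 h0 with h | h
  · have := sub_eq_zero.1 h
    exact this
  · exfalso
    have hw_eq := sub_eq_zero.1 h
    have : w.im = -(cmpt D a b).im := by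
      rw [hw_eq, Complex.conj_im]
    have h2 := cmpt_im_pos hD ha b
    rw [this] at him
    linarith

lemma qpoly_norm_lb {D : ℤ} (hD : D < 0) {a b c : ℤ} (ha : 0 < a)
    (hdisc : b ^ 2 - 4 * a * c = D) (z : ℂ) {δ y₀ : ℝ}
    (hδpos : 0 < δ) (hy₀pos : 0 < y₀) (hy₀ : y₀ ≤ z.im)
    (hδ : δ ≤ dist z (cmpt D a b)) :
    (a:ℝ) * (δ * max |z.re - (cmpt D a b).re| y₀) ≤ ‖qpoly (a, b, c) z‖ := by
  have hfac := qpoly_factor hD ha hdisc z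
  rw [hfac]
  rw [norm_mul, norm_mul]
  have h1 : ‖((a:ℤ):ℂ)‖ = (a:ℝ) := by
    rw [Complex.norm_intCast]
    rw [abs_of_pos (by exact_mod_cast ha : (0:ℝ) < (a:ℝ))]
  rw [h1]
  have h2 : δ ≤ ‖z - cmpt D a b‖ := by
    rwa [← dist_eq_norm]
  have h3 : max |z.re - (cmpt D a b).re| y₀ ≤ ‖z - (starRingEnd ℂ) (cmpt D a b)‖ := by
    apply max_le
    · have : |(z - (starRingEnd ℂ) (cmpt D a b)).re| ≤ ‖z - (starRingEnd ℂ) (cmpt D a b)‖ :=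
        Complex.abs_re_le_norm _
      simpa [Complex.sub_re, Complex.conj_re] using this
    · have him : (z - (starRingEnd ℂ) (cmpt D a b)).im = z.im + (cmpt D a b).im := by
        simp [Complex.sub_im, Complex.conj_im]
      have h5 : |(z - (starRingEnd ℂ) (cmpt D a b)).im| ≤ ‖z - (starRingEnd ℂ) (cmpt D a b)‖ :=
        Complex.abs_im_le_norm _
      have h6 : y₀ ≤ (z - (starRingEnd ℂ) (cmpt D a b)).im := by
        rw [him]
        have := (cmpt_im_pos hD ha b)
        linarith
      calc y₀ ≤ |(z - (starRingEnd ℂ) (cmpt D a b)).im| := le_trans h6 (le_abs_self _)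
        _ ≤ _ := h5
  have haR : (0:ℝ) ≤ (a:ℝ) := by positivity
  rw [mul_assoc]
  apply mul_le_mul_of_nonneg_left _ haR
  apply mul_le_mul h2 h3 (le_trans hy₀pos.le (le_max_right _ _)) (norm_nonneg _)

lemma finset_exists_pos_lb {ι : Type*} (F : Finset ι) (f : ι → ℝ)
    (h : ∀ i ∈ F, 0 < f i) : ∃ ε > 0, ∀ i ∈ F, ε ≤ f i := by
  classical
  induction F using Finset.induction_on with
  | empty => exact ⟨1, one_pos, by simp⟩
  | @insert i F hi ih =>
    obtain ⟨ε, hε, hle⟩ := ih (fun j hj => h j (Finset.mem_insert_of_mem hj))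
    refine ⟨min ε (f i), lt_min hε (h i (Finset.mem_insert_self _ _)), ?_⟩
    intro j hj
    rcases Finset.mem_insert.1 hj with rfl | hj
    · exact min_le_right _ _
    · exact le_trans (min_le_left _ _) (hle j hj)

lemma isClosed_cm_union {D : ℤ} (hD : D < 0) (t : ℝ) (ht : 0 < t) :
    IsClosed ({w : ℂ | w.im ≤ t} ∪ {w : ℂ | IsCM D w}) := by
  rw [← isOpen_compl_iff]
  rw [Metric.isOpen_iff]
  intro w hw
  simp only [Set.mem_compl_iff, Set.mem_union, Set.mem_setOf_eq, not_or, not_le] at hw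
  obtain ⟨hwt, hwcm⟩ := hw
  -- candidate finite set
  set A : ℤ := ⌈Real.sqrt (-(D:ℝ)) / w.im⌉ with hA
  set B : ℤ := ⌈2*(A:ℝ)*(|w.re|+1)⌉ with hB
  set F : Finset (ℤ × ℤ) :=
    ((Finset.Icc 1 A) ×ˢ (Finset.Icc (-B) B)).filter (fun p => cmpt D p.1 p.2 ≠ w) with hF
  obtain ⟨ε₀, hε₀, hεlb⟩ := finset_exists_pos_lb F (fun p => dist w (cmpt D p.1 p.2))
    (by
      intro p hp
      rw [hF] at hp
      have := (Finset.mem_filter.1 hp).2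
      rw [dist_pos]
      exact fun hc => this hc.symm)
  refine ⟨min (min ε₀ 1) (min (w.im - t) (w.im / 2)), ?_, ?_⟩
  · apply lt_min (lt_min hε₀ one_pos) (lt_min (by linarith) (by linarith))
  · intro u hu
    rw [Metric.mem_ball] at hu
    simp only [Set.mem_compl_iff, Set.mem_union, Set.mem_setOf_eq, not_or, not_le]
    have hdru : dist u w < min (min ε₀ 1) (min (w.im - t) (w.im / 2)) := hu
    have him : |u.im - w.im| ≤ dist u w := by
      have := Complex.abs_im_le_norm (u - w)
      simpa [Complex.sub_im, Complex.dist_eq] using this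
    have hre : |u.re - w.re| ≤ dist u w := by
      have := Complex.abs_re_le_norm (u - w)
      simpa [Complex.sub_re, Complex.dist_eq] using this
    constructor
    · have h1 : dist u w < w.im - t := lt_of_lt_of_le hdru (le_trans (min_le_right _ _) (min_le_left _ _))
      have := abs_le.1 him
      linarith
    · intro hcm
      obtain ⟨a, b, c, ha, hdisc, hueq⟩ := isCM_eq_cmpt hD hcm
      -- bounds on a and b
      have him2 : w.im / 2 ≤ u.im := by
        have h1 : dist u w < w.im / 2 := lt_of_lt_of_le hdru (le_trans (min_le_right _ _) (min_le_right _ _))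
        have := abs_le.1 him
        linarith
      have hapos : (0:ℝ) < (a:ℝ) := by exact_mod_cast ha
      have himu : u.im = Real.sqrt (-(D:ℝ)) / (2*(a:ℝ)) := by rw [hueq, cmpt_im]
      have hwim : 0 < w.im := lt_trans ht hwt
      have hsq : (a:ℝ) * w.im ≤ Real.sqrt (-(D:ℝ)) := by
        rw [himu] at him2
        rw [le_div_iff₀ (by linarith : (0:ℝ) < 2*(a:ℝ))] at him2
        nlinarith
      have haA : a ≤ A := by
        have h1 : (a:ℝ) ≤ Real.sqrt (-(D:ℝ)) / w.im := (le_div_iff₀ hwim).2 hsq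
        have h2 : Real.sqrt (-(D:ℝ)) / w.im ≤ ((A:ℤ):ℝ) := by
          rw [hA]; exact Int.le_ceil _
        exact_mod_cast le_trans h1 h2
      have hbB : -B ≤ b ∧ b ≤ B := by
        have hureu : u.re = -(b:ℝ)/(2*(a:ℝ)) := by rw [hueq, cmpt_re]
        have hrew : |u.re| ≤ |w.re| + 1 := by
          have h1 : dist u w < 1 := lt_of_lt_of_le hdru (le_trans (min_le_left _ _) (min_le_right _ _))
          have h2 := abs_le.1 hre
          have := abs_le.1 (le_of_lt (lt_of_le_of_lt hre h1))
          rw [abs_le]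
          cases' abs_le.1 (le_refl |w.re|) with hw1 hw2
          constructor <;> [nlinarith [abs_nonneg w.re, le_abs_self w.re, neg_abs_le w.re]; nlinarith [le_abs_self w.re, neg_abs_le w.re]]
        have hbabs : |(b:ℝ)| ≤ 2*(a:ℝ)*(|w.re|+1) := by
          have h3 : (b:ℝ) = -(2*(a:ℝ))*u.re := by
            rw [hureu]; field_simp
          rw [h3, abs_mul, abs_neg, abs_of_pos (by linarith : (0:ℝ) < 2*(a:ℝ))]
          have : 0 ≤ 2*(a:ℝ) := by linarith
          exact mul_le_mul_of_nonneg_left hrew this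
        have hAB : 2*(a:ℝ)*(|w.re|+1) ≤ ((B:ℤ):ℝ) := by
          have h4 : 2*(a:ℝ)*(|w.re|+1) ≤ 2*(A:ℝ)*(|w.re|+1) := by
            have : (a:ℝ) ≤ (A:ℝ) := by exact_mod_cast haA
            nlinarith [abs_nonneg w.re]
          refine le_trans h4 ?_
          rw [hB]; exact Int.le_ceil _
        have h6 : |(b:ℝ)| ≤ ((B:ℤ):ℝ) := le_trans hbabs hAB
        have h7 : |b| ≤ B := by exact_mod_cast (by rwa [← Int.cast_abs] at h6 : ((|b|:ℤ):ℝ) ≤ ((B:ℤ):ℝ))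
        exact abs_le.1 h7
      have hmemF : (a, b) ∈ F := by
        rw [hF]
        refine Finset.mem_filter.2 ⟨Finset.mem_product.2 ⟨Finset.mem_Icc.2 ⟨ha, haA⟩, Finset.mem_Icc.2 hbB⟩, ?_⟩
        simp only
        intro hc
        apply hwcm
        rw [← hc, ← hueq]
        exact hcm
      have hlb := hεlb (a, b) hmemF
      simp only at hlb
      rw [← hueq] at hlb
      have : dist u w < ε₀ := lt_of_lt_of_le hdru (le_trans (min_le_left _ _) (min_le_left _ _))
      rw [dist_comm] at hlb
      linarith

lemma cm_separation {D : ℤ} (hD : D < 0) {K : Set ℂ} (hK : IsCompact K)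
    (hne : K.Nonempty) (hKsub : K ⊆ {z : ℂ | 0 < z.im ∧ ¬ IsCM D z})
    {y₀ : ℝ} (hy₀pos : 0 < y₀) (hy₀ : ∀ z ∈ K, y₀ ≤ z.im) :
    ∃ δ > 0, ∀ z ∈ K, ∀ w, IsCM D w → δ ≤ dist z w := by
  set S : Set ℂ := {w : ℂ | w.im ≤ y₀/2} ∪ {w : ℂ | IsCM D w} with hSdef
  have hScl : IsClosed S := isClosed_cm_union hD (y₀/2) (by linarith)
  have hSne : S.Nonempty := ⟨0, Or.inl (by simp; linarith)⟩
  have hnotmem : ∀ z ∈ K, z ∉ S := by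
    intro z hz hmem
    obtain ⟨him, hcm⟩ := hKsub hz
    rcases hmem with h | h
    · have := hy₀ z hz
      simp only [Set.mem_setOf_eq] at h
      linarith
    · exact hcm h
  obtain ⟨z₀, hz₀K, hz₀min⟩ := hK.exists_isMinOn hne
    ((Metric.continuous_infDist_pt S).continuousOn)
  refine ⟨Metric.infDist z₀ S, ?_, ?_⟩
  · exact (hScl.notMem_iff_infDist_pos hSne).1 (hnotmem z₀ hz₀K)
  · intro z hz w hw
    calc Metric.infDist z₀ S ≤ Metric.infDist z S := hz₀min hz
      _ ≤ dist z w := Metric.infDist_le_dist_of_mem (Or.inr hw)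


lemma divisors_card_le (m : ℕ) (hm : 0 < m) : m.divisors.card ≤ 2 * (Nat.sqrt m + 1) := by
  classical
  have h : m.divisors.card ≤ ((Finset.range (Nat.sqrt m + 1)) ×ˢ (Finset.range 2)).card := by
    apply Finset.card_le_card_of_injOn (fun d => if d * d ≤ m then (d, 0) else (m / d, 1))
    · intro d hd
      rw [Finset.mem_coe, Nat.mem_divisors] at hd
      by_cases h : d * d ≤ m
      · simp only [h, if_pos]
        refine Finset.mem_product.2 ⟨Finset.mem_range.2 ?_, by simp⟩
        have := Nat.le_sqrt.2 h
        omega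
      · simp only [h, if_neg, not_false_iff]
        refine Finset.mem_product.2 ⟨Finset.mem_range.2 ?_, by simp⟩
        have hd0 : 0 < d := Nat.pos_of_dvd_of_pos hd.1 hm
        have h1 : m / d ≤ Nat.sqrt m := by
          apply Nat.le_sqrt.2
          calc m / d * (m / d) ≤ m / d * d := by
                apply Nat.mul_le_mul_left
                by_contra hc
                push_neg at hc
                have : d * d ≤ d * (m/d) := Nat.mul_le_mul_left _ (by omega)
                have h2 : d * (m/d) = m := by
                  rw [Nat.mul_div_cancel' hd.1]
                omega
            _ ≤ m := Nat.div_mul_le_self m d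
        omega
    · intro d1 h1 d2 h2 heq
      rw [Finset.mem_coe, Nat.mem_divisors] at h1 h2
      simp only at heq
      by_cases c1 : d1 * d1 ≤ m <;> by_cases c2 : d2 * d2 ≤ m <;>
        simp only [c1, c2, if_pos, if_neg, not_false_iff, Prod.mk.injEq] at heq
      · exact heq.1
      · exact absurd heq.2 (by norm_num)
      · exact absurd heq.2 (by norm_num)
      · have e1 : m / (m / d1) = d1 := Nat.div_div_self h1.1 h1.2
        have e2 : m / (m / d2) = d2 := Nat.div_div_self h2.1 h2.2
        rw [← e1, ← e2, heq.1]
  simpa [Finset.card_product, mul_comm] using h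


lemma sqrt_count (n : ℕ) (hn : 0 < n) (m : ℕ) (hm : 0 < m) :
    ((Finset.range m).filter (fun y : ℕ => (m:ℤ) ∣ (y:ℤ)^2 + (n:ℤ))).card
      ≤ 8 * n * (Nat.sqrt m + 1) := by
  classical
  set S := (Finset.range m).filter (fun y : ℕ => (m:ℤ) ∣ (y:ℤ)^2 + (n:ℤ)) with hS
  rcases S.eq_empty_or_nonempty with h | ⟨x₀, hx₀⟩
  · simp [h]
  have hx₀m : x₀ < m := Finset.mem_range.1 (Finset.mem_filter.1 hx₀).1
  have hx₀d : (m:ℤ) ∣ (x₀:ℤ)^2 + n := (Finset.mem_filter.1 hx₀).2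
  set g : ℕ → ℕ := fun y => Int.gcd ((x₀:ℤ) - (y:ℤ)) (m:ℤ) with hgdef
  set e : ℕ → ℕ := fun y => Nat.gcd (g y) (m / g y) with hedef
  set L : ℕ → ℕ := fun y => m / e y with hLdef
  have key : ∀ y ∈ S, g y ∣ m ∧ 0 < g y ∧ e y ∣ 4 * n ∧ 0 < e y ∧
      ((m / g y : ℕ) : ℤ) ∣ (x₀:ℤ) + (y:ℤ) := by
    intro y hy
    have hyd : (m:ℤ) ∣ (y:ℤ)^2 + n := (Finset.mem_filter.1 hy).2
    have hg_dvd_m : (g y : ℤ) ∣ (m:ℤ) := Int.gcd_dvd_right _ _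
    have hg_dvd_mn : g y ∣ m := by exact_mod_cast hg_dvd_m
    have hgpos : 0 < g y := by
      rcases Nat.eq_zero_or_pos (g y) with h0 | h
      · exfalso
        have h2 := (Int.gcd_eq_zero_iff.1 h0).2
        have : m = 0 := by exact_mod_cast h2
        omega
      · exact h
    have hgne : (g y : ℤ) ≠ 0 := by exact_mod_cast hgpos.ne'
    have hg_dvd_diff : (g y : ℤ) ∣ (x₀:ℤ) - y := Int.gcd_dvd_left _ _
    have hm_dvd : (m:ℤ) ∣ ((x₀:ℤ) - y) * ((x₀:ℤ) + y) := by
      have h : ((x₀:ℤ) - y) * ((x₀:ℤ) + y) = ((x₀:ℤ)^2 + n) - ((y:ℤ)^2 + n) := by ring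
      rw [h]; exact dvd_sub hx₀d hyd
    have hcop : Int.gcd (((x₀:ℤ) - y) / g y) ((m:ℤ) / g y) = 1 :=
      Int.gcd_div_gcd_div_gcd (by exact hgpos)
    obtain ⟨u, hu⟩ := hg_dvd_diff
    obtain ⟨v, hv⟩ := hg_dvd_m
    have hquot : ((m:ℤ) / g y) ∣ (((x₀:ℤ) - y) / g y) * ((x₀:ℤ) + y) := by
      have h1 : (m:ℤ) ∣ (g y:ℤ) * (u * ((x₀:ℤ)+y)) := by
        rw [← mul_assoc, ← hu]; exact hm_dvd
      rw [hv] at h1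
      rw [hu, hv, Int.mul_ediv_cancel_left _ hgne, Int.mul_ediv_cancel_left _ hgne]
      exact (mul_dvd_mul_iff_left hgne).1 h1
    have hdvd_sum : ((m:ℤ) / g y) ∣ (x₀:ℤ) + y := by
      have hic : IsCoprime ((m:ℤ) / g y) (((x₀:ℤ) - y) / g y) :=
        (Int.isCoprime_iff_gcd_eq_one.2 hcop).symm
      exact hic.dvd_of_dvd_mul_left hquot
    have hmdivg : ((m / g y : ℕ) : ℤ) = (m:ℤ) / (g y : ℤ) := by norm_cast
    have he_dvd_g : e y ∣ g y := Nat.gcd_dvd_left _ _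
    have he_dvd_mg : e y ∣ m / g y := Nat.gcd_dvd_right _ _
    have hepos : 0 < e y := Nat.gcd_pos_of_pos_left _ hgpos
    have hg_dvd_diff' : (g y : ℤ) ∣ (x₀:ℤ) - y := ⟨u, hu⟩
    have he4n : e y ∣ 4 * n := by
      have h1 : (e y : ℤ) ∣ (x₀:ℤ) - y :=
        dvd_trans (by exact_mod_cast he_dvd_g) hg_dvd_diff'
      have h2 : (e y : ℤ) ∣ (x₀:ℤ) + y := by
        refine dvd_trans ?_ hdvd_sum
        rw [← hmdivg]; exact_mod_cast he_dvd_mg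
      have h3 : (e y : ℤ) ∣ 2 * (x₀:ℤ) := by
        have h : 2 * (x₀:ℤ) = ((x₀:ℤ) + y) + ((x₀:ℤ) - y) := by ring
        rw [h]; exact dvd_add h2 h1
      have h4 : (e y : ℤ) ∣ (m:ℤ) := by exact_mod_cast dvd_trans he_dvd_g hg_dvd_mn
      have h5 : (e y : ℤ) ∣ (2*(x₀:ℤ))^2 + 4*n := by
        refine dvd_trans h4 ?_
        have h : (2*(x₀:ℤ))^2 + 4*(n:ℤ) = 4 * ((x₀:ℤ)^2 + n) := by ring
        rw [h]; exact Dvd.dvd.mul_left hx₀d 4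
      have h6 : (e y : ℤ) ∣ 4 * (n:ℤ) := by
        have h : (4:ℤ) * n = ((2*(x₀:ℤ))^2 + 4*n) - (2*(x₀:ℤ))^2 := by ring
        rw [h]; exact dvd_sub h5 (dvd_pow h3 (by norm_num))
      exact_mod_cast h6
    refine ⟨hg_dvd_mn, hgpos, he4n, hepos, ?_⟩
    rw [hmdivg]; exact hdvd_sum
  have hcard : S.card ≤ (m.divisors ×ˢ Finset.range (4 * n)).card := by
    apply Finset.card_le_card_of_injOn (fun y => (g y, y / L y))
    · intro y hy
      obtain ⟨h1, h2, h3, h4, _⟩ := key y hy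
      refine Finset.mem_product.2 ⟨Nat.mem_divisors.2 ⟨h1, hm.ne'⟩, Finset.mem_range.2 ?_⟩
      have heL : L y * e y = m := Nat.div_mul_cancel (dvd_trans (Nat.gcd_dvd_left _ _) h1)
      have hLpos : 0 < L y := by
        rcases Nat.eq_zero_or_pos (L y) with h0 | h
        · exfalso; rw [h0] at heL; simp at heL; omega
        · exact h
      have hym : y < m := Finset.mem_range.1 (Finset.mem_filter.1 hy).1
      have hlt : y / L y < e y := by
        rw [Nat.div_lt_iff_lt_mul hLpos]
        rw [mul_comm] at heL
        omega
      have he4 : e y ≤ 4 * n := Nat.le_of_dvd (by omega) h3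
      dsimp only
      omega
    · intro y hy y' hy' heq
      simp only [Finset.mem_coe] at hy hy'
      simp only [Prod.mk.injEq] at heq
      obtain ⟨hgg, hdd⟩ := heq
      obtain ⟨h1, h2, h3, h4, h5⟩ := key y hy
      obtain ⟨h1', h2', h3', h4', h5'⟩ := key y' hy'
      have hLeq : L y = L y' := by
        rw [hLdef]; simp only; rw [hedef]; simp only; rw [hgg]
      have hgdiff : (g y : ℤ) ∣ (y:ℤ) - y' := by
        have a1 : (g y : ℤ) ∣ (x₀:ℤ) - y := Int.gcd_dvd_left _ _
        have a2 : (g y' : ℤ) ∣ (x₀:ℤ) - y' := Int.gcd_dvd_left _ _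
        rw [← hgg] at a2
        have h : (y:ℤ) - y' = ((x₀:ℤ) - y') - ((x₀:ℤ) - y) := by ring
        rw [h]; exact dvd_sub a2 a1
      have hmgdiff : ((m / g y : ℕ) : ℤ) ∣ (y:ℤ) - y' := by
        have a2 := h5'
        rw [← hgg] at a2
        have h : (y:ℤ) - y' = ((x₀:ℤ) + y) - ((x₀:ℤ) + y') := by ring
        rw [h]; exact dvd_sub h5 a2
      have hlcm : (Nat.lcm (g y) (m / g y) : ℤ) ∣ (y:ℤ) - y' := by
        have h := Int.ofNat_dvd_left.mpr (Int.lcm_dvd (Int.dvd_natAbs.mpr hgdiff) (Int.dvd_natAbs.mpr hmgdiff))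
        have heqq : Int.lcm ((g y : ℕ) : ℤ) ((m / g y : ℕ) : ℤ) = Nat.lcm (g y) (m / g y) := by
          rw [Int.lcm]
          rw [Int.natAbs_natCast, Int.natAbs_natCast]
        rwa [heqq] at h
      have hml := Nat.gcd_mul_lcm (g y) (m / g y)
      have hgm : g y * (m / g y) = m := Nat.mul_div_cancel' h1
      rw [hgm] at hml
      have hlcmL : L y = Nat.lcm (g y) (m / g y) := by
        refine Nat.div_eq_of_eq_mul_left h4 ?_
        rw [mul_comm]
        exact hml.symm
      rw [← hlcmL] at hlcm
      have hmod : y' ≡ y [MOD L y] := Nat.modEq_iff_dvd.2 hlcm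
      have hmodeq : y' % L y = y % L y := hmod
      have d1 := Nat.div_add_mod y (L y)
      rw [← hLeq] at hdd
      have d2 := Nat.div_add_mod y' (L y)
      rw [← hdd] at d2
      omega
  calc S.card ≤ (m.divisors ×ˢ Finset.range (4 * n)).card := hcard
    _ = m.divisors.card * (4 * n) := by rw [Finset.card_product, Finset.card_range]
    _ ≤ (2 * (Nat.sqrt m + 1)) * (4 * n) := by
        exact Nat.mul_le_mul_right _ (divisors_card_le m hm)
    _ = 8 * n * (Nat.sqrt m + 1) := by ring

lemma summable_W : Summable (fun j : ℤ => ((|(j:ℝ)| + 1)^2)⁻¹) := by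
  have hnat : Summable (fun n : ℕ => (((n:ℝ) + 1)^2)⁻¹) := by
    have h := (summable_nat_add_iff (f := fun n : ℕ => (((n:ℝ))^2)⁻¹) 1).2
      (Real.summable_nat_pow_inv.2 one_lt_two)
    refine h.congr fun n => ?_
    push_cast
    ring_nf
  apply Summable.of_nat_of_neg
  · refine hnat.congr fun n => ?_
    simp [_root_.abs_of_nonneg (by positivity : (0:ℝ) ≤ (n:ℝ))]
  · refine hnat.congr fun n => ?_
    simp [_root_.abs_of_nonneg (by positivity : (0:ℝ) ≤ (n:ℝ))]


lemma summable_H {D : ℤ} (hD : D < 0) (C : ℝ) (hC : 0 ≤ C) :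
    Summable (fun p : ℕ × ℕ =>
      if 0 < p.1 ∧ p.2 < 2*p.1 ∧ ((4*(p.1:ℤ)) ∣ ((p.2:ℤ)^2 - D)) then C / ((p.1:ℝ))^2 else 0) := by
  set n : ℕ := (-D).toNat with hn
  have hnpos : 0 < n := by omega
  have hnD : (n:ℤ) = -D := by omega
  set f : ℕ × ℕ → ℝ := fun p =>
    if 0 < p.1 ∧ p.2 < 2*p.1 ∧ ((4*(p.1:ℤ)) ∣ ((p.2:ℤ)^2 - D)) then C / ((p.1:ℝ))^2 else 0 with hf
  have hf0' : ∀ p, 0 ≤ f p := by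
    intro p
    rw [hf]
    simp only
    split
    · positivity
    · exact le_refl 0
  have hf0 : 0 ≤ f := fun p => hf0' p
  rw [summable_prod_of_nonneg hf0]
  constructor
  · intro a
    apply summable_of_ne_finset_zero (s := Finset.range (2*a))
    intro r hr
    rw [Finset.mem_range, not_lt] at hr
    rw [hf]
    simp only
    rw [if_neg]
    rintro ⟨-, h2, -⟩
    omega
  · -- outer summability
    have key : ∀ a : ℕ, ∑' r : ℕ, f (a, r) ≤ (24 * n * C) * (((a:ℝ))^((3:ℝ)/2))⁻¹ := by
      intro a
      rcases Nat.eq_zero_or_pos a with rfl | hapos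
      · have hz : ∀ r : ℕ, f (0, r) = 0 := by
          intro r; rw [hf]; simp
        rw [tsum_congr hz, tsum_zero]
        rw [Nat.cast_zero, Real.zero_rpow (by norm_num : (3:ℝ)/2 ≠ 0)]
        simp
      · have hA1 : (1:ℝ) ≤ (a:ℝ) := by exact_mod_cast hapos
        have hApos : (0:ℝ) < (a:ℝ) := by linarith
        have hsupp : ∀ r ∉ Finset.range (4*a), f (a, r) = 0 := by
          intro r hr
          rw [Finset.mem_range, not_lt] at hr
          rw [hf]; simp only; rw [if_neg]
          rintro ⟨-, h2, -⟩
          omega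
        rw [tsum_eq_sum hsupp]
        have step1 : ∑ r ∈ Finset.range (4*a), f (a, r)
            ≤ ∑ r ∈ Finset.range (4*a),
              (if ((4*a : ℕ):ℤ) ∣ (r:ℤ)^2 + (n:ℤ) then C / ((a:ℝ))^2 else 0) := by
          apply Finset.sum_le_sum
          intro r hr
          rw [hf]; simp only
          by_cases hcond : 0 < a ∧ r < 2*a ∧ ((4*(a:ℤ)) ∣ ((r:ℤ)^2 - D))
          · have hdvd : ((4*a : ℕ):ℤ) ∣ (r:ℤ)^2 + (n:ℤ) := by
              have h := hcond.2.2
              have heq : (r:ℤ)^2 + (n:ℤ) = (r:ℤ)^2 - D := by rw [hnD]; ring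
              rw [heq]
              have hcast : ((4*a : ℕ):ℤ) = 4*(a:ℤ) := by push_cast; ring
              rw [hcast]
              exact h
            rw [if_pos hcond, if_pos hdvd]
          · rw [if_neg hcond]
            split
            · positivity
            · exact le_refl 0
        have step2 : ∑ r ∈ Finset.range (4*a),
              (if ((4*a : ℕ):ℤ) ∣ (r:ℤ)^2 + (n:ℤ) then C / ((a:ℝ))^2 else 0)
            = (((Finset.range (4*a)).filter
                (fun y : ℕ => ((4*a : ℕ):ℤ) ∣ (y:ℤ)^2 + (n:ℤ))).card : ℝ) * (C / ((a:ℝ))^2) := by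
          rw [← Finset.sum_filter]
          rw [Finset.sum_const, nsmul_eq_mul]
        have step3 : (((Finset.range (4*a)).filter
                (fun y : ℕ => ((4*a : ℕ):ℤ) ∣ (y:ℤ)^2 + (n:ℤ))).card : ℝ)
            ≤ 8 * n * ((Nat.sqrt (4*a) : ℝ) + 1) := by
          have h := sqrt_count n hnpos (4*a) (by omega)
          exact_mod_cast h
        have hsA : (1:ℝ) ≤ Real.sqrt (a:ℝ) := by
          nlinarith [Real.sq_sqrt hApos.le, Real.sqrt_nonneg (a:ℝ), hA1]
        have hsqrt : ((Nat.sqrt (4*a) : ℝ)) ≤ 2 * Real.sqrt (a:ℝ) := by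
          have h1 : ((Nat.sqrt (4*a) : ℝ))^2 ≤ 4*(a:ℝ) := by
            exact_mod_cast Nat.sqrt_le' (4*a)
          nlinarith [Real.sq_sqrt hApos.le, Real.sqrt_nonneg (a:ℝ),
            (by positivity : (0:ℝ) ≤ ((Nat.sqrt (4*a) : ℝ)))]
        have hrpow : ((a:ℝ))^((3:ℝ)/2) * Real.sqrt (a:ℝ) = ((a:ℝ))^2 := by
          rw [Real.sqrt_eq_rpow, ← Real.rpow_add hApos]
          rw [show ((3:ℝ)/2 + 1/2) = ((2:ℕ):ℝ) by norm_num]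
          rw [Real.rpow_natCast]
        have hfinal : 8 * (n:ℝ) * ((Nat.sqrt (4*a) : ℝ) + 1) * (C / ((a:ℝ))^2)
            ≤ (24 * n * C) * (((a:ℝ))^((3:ℝ)/2))⁻¹ := by
          have h5 : ((Nat.sqrt (4*a) : ℝ) + 1) ≤ 3 * Real.sqrt (a:ℝ) := by linarith
          have hsq_pos : (0:ℝ) < Real.sqrt (a:ℝ) := by linarith
          have hrp_pos : (0:ℝ) < ((a:ℝ))^((3:ℝ)/2) := by positivity
          have hinv : Real.sqrt (a:ℝ) / ((a:ℝ))^2 = (((a:ℝ))^((3:ℝ)/2))⁻¹ := by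
            rw [← hrpow]
            field_simp
          calc 8 * (n:ℝ) * ((Nat.sqrt (4*a) : ℝ) + 1) * (C / ((a:ℝ))^2)
              ≤ 8 * (n:ℝ) * (3 * Real.sqrt (a:ℝ)) * (C / ((a:ℝ))^2) := by
                apply mul_le_mul_of_nonneg_right _ (by positivity)
                apply mul_le_mul_of_nonneg_left h5 (by positivity)
            _ = (24 * n * C) * (Real.sqrt (a:ℝ) / ((a:ℝ))^2) := by ring
            _ = (24 * n * C) * (((a:ℝ))^((3:ℝ)/2))⁻¹ := by rw [hinv]
        calc ∑ r ∈ Finset.range (4*a), f (a, r)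
            ≤ (((Finset.range (4*a)).filter
                (fun y : ℕ => ((4*a : ℕ):ℤ) ∣ (y:ℤ)^2 + (n:ℤ))).card : ℝ) * (C / ((a:ℝ))^2) := by
              rw [← step2]; exact step1
          _ ≤ (8 * n * ((Nat.sqrt (4*a) : ℝ) + 1)) * (C / ((a:ℝ))^2) := by
              apply mul_le_mul_of_nonneg_right step3 (by positivity)
          _ ≤ (24 * n * C) * (((a:ℝ))^((3:ℝ)/2))⁻¹ := by
              have := hfinal
              linarith [hfinal]
    apply Summable.of_nonneg_of_le (fun a => tsum_nonneg (fun r => hf0' (a, r))) key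
    apply Summable.mul_left
    exact Real.summable_nat_rpow_inv.2 (by norm_num)


lemma main_bound (k : ℕ) (hk : 2 ≤ k) {D : ℤ} (hD : D < 0) {K : Set ℂ} (hK : IsCompact K)
    (hKsub : K ⊆ {z : ℂ | 0 < z.im ∧ ¬ IsCM D z}) :
    ∃ u : QF D → ℝ, Summable u ∧ ∀ Q : QF D, ∀ z ∈ K, ‖qpoly Q.1 z ^ (-(k : ℤ))‖ ≤ u Q := by
  classical
  rcases K.eq_empty_or_nonempty with rfl | hne
  · exact ⟨0, summable_zero, fun Q z hz => absurd hz (Set.notMem_empty z)⟩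
  -- minimum imaginary part
  obtain ⟨z₀, hz₀K, hz₀min⟩ := hK.exists_isMinOn hne Complex.continuous_im.continuousOn
  set y₀ : ℝ := z₀.im with hy₀def
  have hy₀pos : 0 < y₀ := (hKsub hz₀K).1
  have hy₀ : ∀ z ∈ K, y₀ ≤ z.im := fun z hz => hz₀min hz
  -- bound on real part
  obtain ⟨R, hR⟩ := hK.isBounded.subset_closedBall 0
  set X : ℝ := max R 0 with hXdef
  have hX0 : 0 ≤ X := le_max_right _ _
  have hX : ∀ z ∈ K, |z.re| ≤ X := by
    intro z hz
    have h1 : ‖z‖ ≤ R := by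
      have := hR hz
      rwa [Metric.mem_closedBall, dist_zero_right] at this
    exact le_trans (Complex.abs_re_le_norm z) (le_trans h1 (le_max_left _ _))
  -- separation from CM points
  obtain ⟨δ, hδpos, hδ⟩ := cm_separation hD hK hne hKsub hy₀pos hy₀
  set β : ℝ := δ * min (y₀/(2*X+4)) (1/2) with hβdef
  have hβpos : 0 < β := by
    apply mul_pos hδpos
    apply lt_min
    · apply div_pos hy₀pos; linarith
    · norm_num
  -- the majorant
  set CC : ℝ := (β^k)⁻¹ with hCCdef
  have hCC : 0 ≤ CC := by positivity
  set G : (ℕ × ℕ) × ℤ → ℝ := fun q =>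
    (if 0 < q.1.1 ∧ q.1.2 < 2*q.1.1 ∧ ((4*(q.1.1:ℤ)) ∣ ((q.1.2:ℤ)^2 - D)) then CC / ((q.1.1:ℝ))^2 else 0)
      * ((|(q.2:ℝ)| + 1)^2)⁻¹ with hGdef
  have hGsummable : Summable G := by
    apply Summable.mul_of_nonneg (summable_H hD CC hCC) summable_W
    · intro p
      simp only
      split
      · positivity
      · exact le_refl 0
    · intro j
      positivity
  set ι : QF D → (ℕ × ℕ) × ℤ := fun Q =>
    ((Q.1.1.toNat, (Q.1.2.1 % (2*Q.1.1)).toNat), Q.1.2.1 / (2*Q.1.1)) with hιdef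
  have hι_inj : Function.Injective ι := by
    rintro ⟨⟨a, b, c⟩, ha, hQ⟩ ⟨⟨a', b', c'⟩, ha', hQ'⟩ heq
    simp only [hιdef, Prod.mk.injEq] at heq
    obtain ⟨⟨h1, h2⟩, h3⟩ := heq
    simp only at ha hQ ha' hQ' h1 h2 h3
    have haa : a = a' := by omega
    subst haa
    have hbb : b = b' := by
      have d1 := Int.mul_ediv_add_emod b (2*a)
      have d2 := Int.mul_ediv_add_emod b' (2*a)
      have hmodnn : 0 ≤ b % (2*a) := Int.emod_nonneg b (by omega)
      have hmodnn' : 0 ≤ b' % (2*a) := Int.emod_nonneg b' (by omega)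
      have hmodeq : b % (2*a) = b' % (2*a) := by
        have e1 := Int.toNat_of_nonneg hmodnn
        have e2 := Int.toNat_of_nonneg hmodnn'
        rw [← e1, ← e2, h2]
      rw [← h3] at d2
      linarith
    subst hbb
    have hcc : c = c' := by
      have : 4*a*c = 4*a*c' := by linarith
      have ha0 : a ≠ 0 := by omega
      have h4a : (4*a) ≠ 0 := by omega
      exact mul_left_cancel₀ h4a this
    subst hcc
    rfl
  refine ⟨G ∘ ι, hGsummable.comp_injective hι_inj, ?_⟩
  rintro ⟨⟨a, b, c⟩, haQ, hQdisc⟩ z hz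
  simp only at haQ hQdisc
  set j : ℤ := b / (2*a) with hjdef
  set r : ℤ := b % (2*a) with hrdef
  have h2apos : (0:ℤ) < 2*a := by omega
  have hr0 : 0 ≤ r := Int.emod_nonneg b (by omega)
  have hrlt : r < 2*a := Int.emod_lt_of_pos b h2apos
  have hbdecomp : 2*a*j + r = b := Int.mul_ediv_add_emod b (2*a)
  -- value of the majorant
  have hcond : 0 < a.toNat ∧ r.toNat < 2*a.toNat ∧ ((4*(a.toNat:ℤ)) ∣ ((r.toNat:ℤ)^2 - D)) := by
    refine ⟨by omega, by omega, ?_⟩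
    have hra : (r.toNat : ℤ) = r := Int.toNat_of_nonneg hr0
    have haa : (a.toNat : ℤ) = a := Int.toNat_of_nonneg (by omega)
    rw [hra, haa]
    have h4ac : b^2 - D = 4*a*c := by omega
    have : r^2 - D = (b - 2*a*j)^2 - D := by rw [← hbdecomp]; ring_nf
    rw [this]
    have hexp : (b - 2*a*j)^2 - D = 4*a*(c - j*b + a*j^2) := by
      have : (b - 2*a*j)^2 - D = (b^2 - D) - 4*a*(j*b - a*j^2) := by ring
      rw [this, h4ac]; ring
    rw [hexp]
    exact ⟨c - j*b + a*j^2, by ring⟩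
  have hGval : G (ι ⟨(a, b, c), haQ, hQdisc⟩)
      = CC / ((a:ℝ))^2 * ((|(j:ℝ)| + 1)^2)⁻¹ := by
    simp only [hGdef, hιdef]
    rw [if_pos hcond]
    have haa : ((a.toNat : ℕ) : ℝ) = (a:ℝ) := by
      have : (a.toNat : ℤ) = a := Int.toNat_of_nonneg (by omega)
      exact_mod_cast congrArg (Int.cast (R := ℝ)) this
    rw [haa]
  refine le_trans ?_ (le_of_eq hGval.symm)
  -- the analytic lower bound
  have hδz : δ ≤ dist z (cmpt D a b) :=
    hδ z hz (cmpt D a b) (isCM_cmpt hD haQ hQdisc)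
  have hlb := qpoly_norm_lb hD haQ hQdisc z hδpos hy₀pos (hy₀ z hz) hδz
  -- relate to j
  have hapos : (0:ℝ) < (a:ℝ) := by exact_mod_cast haQ
  have hjre : (|(j:ℝ)| - 1) - X ≤ |z.re - (cmpt D a b).re| := by
    have hre : (cmpt D a b).re = -(b:ℝ)/(2*(a:ℝ)) := cmpt_re D a b
    have hb_lb : 2*a*(|j| - 1) ≤ |b| := by
      have h1 : |2*a*j| ≤ |2*a*j + r| + |r| := by
        calc |2*a*j| = |(2*a*j + r) - r| := by ring_nf
          _ ≤ |2*a*j + r| + |r| := abs_sub _ _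
      have h2 : |2*a*j| = 2*a*|j| := by
        rw [abs_mul, abs_of_pos h2apos]
      rw [hbdecomp] at h1
      have h3 : |r| = r := abs_of_nonneg hr0
      have h4 : 2*a*(|j| - 1) = 2*a*|j| - 2*a := by ring
      linarith
    have hb_lbR : 2*(a:ℝ)*(|(j:ℝ)| - 1) ≤ |(b:ℝ)| := by
      have h0 : ((2*a*(|j| - 1) : ℤ) : ℝ) ≤ ((|b| : ℤ) : ℝ) := by exact_mod_cast hb_lb
      push_cast at h0
      convert h0 using 2 <;> simp [Int.cast_abs]
    have hrho : |(cmpt D a b).re| = |(b:ℝ)|/(2*(a:ℝ)) := by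
      rw [hre, abs_div, abs_neg]
      congr 1
      rw [abs_of_pos (by linarith : (0:ℝ) < 2*(a:ℝ))]
    have h3 : |(j:ℝ)| - 1 ≤ |(cmpt D a b).re| := by
      rw [hrho, le_div_iff₀ (by linarith : (0:ℝ) < 2*(a:ℝ))]
      linarith [hb_lbR]
    have h4 : |(cmpt D a b).re| - |z.re| ≤ |z.re - (cmpt D a b).re| := by
      rw [abs_sub_comm]
      exact abs_sub_abs_le_abs_sub _ _
    have h5 := hX z hz
    linarith
  have hkey : β * (|(j:ℝ)| + 1) ≤ δ * max |z.re - (cmpt D a b).re| y₀ := by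
    rcases le_or_gt ((|(j:ℝ)| + 1)) (2*X+4) with hc | hc
    · have h1 : β * (|(j:ℝ)| + 1) ≤ δ * (y₀/(2*X+4)) * (2*X+4) := by
        rw [hβdef]
        have hmin : min (y₀/(2*X+4)) (1/2) ≤ y₀/(2*X+4) := min_le_left _ _
        have hj0 : (0:ℝ) ≤ |(j:ℝ)| + 1 := by positivity
        calc δ * min (y₀/(2*X+4)) (1/2) * (|(j:ℝ)| + 1)
            ≤ δ * (y₀/(2*X+4)) * (|(j:ℝ)| + 1) := by
              apply mul_le_mul_of_nonneg_right _ hj0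
              exact mul_le_mul_of_nonneg_left hmin hδpos.le
          _ ≤ δ * (y₀/(2*X+4)) * (2*X+4) := by
              apply mul_le_mul_of_nonneg_left hc
              have h2X : (0:ℝ) < 2*X+4 := by linarith
              exact mul_nonneg hδpos.le (div_nonneg hy₀pos.le h2X.le)
      have h2 : δ * (y₀/(2*X+4)) * (2*X+4) = δ * y₀ := by
        field_simp
      rw [h2] at h1
      refine le_trans h1 ?_
      apply mul_le_mul_of_nonneg_left (le_max_right _ _) hδpos.le
    · have hM : (|(j:ℝ)| + 1)/2 ≤ |z.re - (cmpt D a b).re| := by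
        have : (|(j:ℝ)| + 1)/2 ≤ (|(j:ℝ)| - 1) - X := by linarith
        linarith [hjre]
      have h1 : β * (|(j:ℝ)| + 1) ≤ δ * ((|(j:ℝ)| + 1)/2) := by
        rw [hβdef]
        have hmin : min (y₀/(2*X+4)) (1/2) ≤ 1/2 := min_le_right _ _
        have hj0 : (0:ℝ) ≤ |(j:ℝ)| + 1 := by positivity
        calc δ * min (y₀/(2*X+4)) (1/2) * (|(j:ℝ)| + 1)
            ≤ δ * (1/2) * (|(j:ℝ)| + 1) := by
              apply mul_le_mul_of_nonneg_right _ hj0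
              exact mul_le_mul_of_nonneg_left hmin hδpos.le
          _ = δ * ((|(j:ℝ)| + 1)/2) := by ring
      refine le_trans h1 ?_
      apply mul_le_mul_of_nonneg_left _ hδpos.le
      exact le_trans hM (le_max_left _ _)
  -- assemble
  have hnormlb : β * (a:ℝ) * (|(j:ℝ)| + 1) ≤ ‖qpoly (a, b, c) z‖ := by
    refine le_trans ?_ hlb
    have : β * (a:ℝ) * (|(j:ℝ)| + 1) = (a:ℝ) * (β * (|(j:ℝ)| + 1)) := by ring
    rw [this]
    exact mul_le_mul_of_nonneg_left hkey hapos.le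
  have hspos : (1:ℝ) ≤ (a:ℝ) * (|(j:ℝ)| + 1) := by
    have ha1 : (1:ℝ) ≤ (a:ℝ) := by exact_mod_cast haQ
    have hj1 : (1:ℝ) ≤ |(j:ℝ)| + 1 := by linarith [abs_nonneg ((j:ℝ))]
    nlinarith
  have hqpos : 0 < ‖qpoly (a, b, c) z‖ := by
    calc (0:ℝ) < β * (a:ℝ) * (|(j:ℝ)| + 1) := by positivity
      _ ≤ _ := hnormlb
  have hnorm_zpow : ‖qpoly (a, b, c) z ^ (-(k:ℤ))‖ = (‖qpoly (a, b, c) z‖^k)⁻¹ := by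
    rw [norm_zpow, zpow_neg, zpow_natCast]
  rw [hnorm_zpow]
  have hstep : (‖qpoly (a, b, c) z‖^k)⁻¹ ≤ ((β * ((a:ℝ) * (|(j:ℝ)| + 1)))^k)⁻¹ := by
    apply inv_anti₀ (by positivity)
    apply pow_le_pow_left₀ (by positivity)
    rw [← mul_assoc]
    exact hnormlb
  refine le_trans hstep ?_
  rw [mul_pow]
  rw [mul_inv]
  have hfin : (((a:ℝ) * (|(j:ℝ)| + 1))^k)⁻¹ ≤ (((a:ℝ) * (|(j:ℝ)| + 1))^2)⁻¹ := by
    apply inv_anti₀ (by positivity)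
    exact pow_le_pow_right₀ hspos hk
  calc (β^k)⁻¹ * (((a:ℝ) * (|(j:ℝ)| + 1))^k)⁻¹
      ≤ (β^k)⁻¹ * (((a:ℝ) * (|(j:ℝ)| + 1))^2)⁻¹ := by
        apply mul_le_mul_of_nonneg_left hfin (by positivity)
    _ = CC / ((a:ℝ))^2 * ((|(j:ℝ)| + 1)^2)⁻¹ := by
        rw [hCCdef, mul_pow ((a:ℝ)) (|(j:ℝ)|+1), mul_inv, div_eq_mul_inv, ← mul_assoc]

/-- For `D < 0`, `D ≡ 0, 1 (mod 4)` and `k ≥ 2`, the series defining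
`f_{k,D}` converges absolutely at every non-CM point of the upper half-plane, and the
convergence is uniform on compact subsets of the upper half-plane minus the CM points
of discriminant `D`. -/
theorem stmt0 (k : ℕ) (hk : 2 ≤ k) (D : ℤ) (hD : D < 0)
    (hDcong : D % 4 = 0 ∨ D % 4 = 1) :
    (∀ z : ℂ, 0 < z.im → ¬ IsCM D z →
      Summable (fun Q : QF D => ‖qpoly Q.1 z ^ (-(k : ℤ))‖)) ∧
    (∀ K : Set ℂ, IsCompact K → K ⊆ {z : ℂ | 0 < z.im ∧ ¬ IsCM D z} →
      TendstoUniformlyOn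
        (fun (s : Finset (QF D)) (z : ℂ) => ∑ Q ∈ s, qpoly Q.1 z ^ (-(k : ℤ)))
        (fun z : ℂ => ∑' Q : QF D, qpoly Q.1 z ^ (-(k : ℤ))) atTop K) := by
  constructor
  · intro z hz hcm
    have hsub : {z} ⊆ {w : ℂ | 0 < w.im ∧ ¬ IsCM D w} := by
      intro w hw
      rw [Set.mem_singleton_iff] at hw
      subst hw
      exact ⟨hz, hcm⟩
    obtain ⟨u, hu, hb⟩ := main_bound k hk hD isCompact_singleton hsub
    exact Summable.of_nonneg_of_le (fun Q => norm_nonneg _)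
      (fun Q => hb Q z (Set.mem_singleton z)) hu
  · intro K hK hKsub
    obtain ⟨u, hu, hb⟩ := main_bound k hk hD hK hKsub
    exact tendstoUniformlyOn_tsum hu (fun Q z hz => hb Q z hz)
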